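/- Let f be a positive, strictly increasing function on [X,∞) that is unbounded above and has finite upper Matuszewska index α(f) > 0. Then the lower Matuszewska index of its right inverse satisfies β(f⁻¹) = 1/α(f). -/

import Mathlib

open Filter Set

/-- The set of admissible upper exponents in the definition of the upper Matuszewska index:
`a` belongs to the set if there is `C > 0` such that for each `μ* > 1`,
`f (μ x) ≤ C μ^a f x` for all `μ ∈ [1, μ*]` and all sufficiently large `x`. -/
def upperMatSet (f : ℝ → ℝ) : Set ℝ :=
  {a | ∃ C > (0 : ℝ), ∀ μs > (1 : ℝ), ∃ X : ℝ, ∀ x ≥ X, ∀ μ ∈ Set.Icc (1 : ℝ) μs,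
    f (μ * x) ≤ C * μ ^ a * f x}

/-- The upper Matuszewska index `α(f)` as an extended real number. -/
noncomputable def upperMat (f : ℝ → ℝ) : EReal :=
  sInf ((fun a : ℝ => (a : EReal)) '' upperMatSet f)

/-- The set of admissible lower exponents in the definition of the lower Matuszewska index. -/
def lowerMatSet (f : ℝ → ℝ) : Set ℝ :=
  {b | ∃ D > (0 : ℝ), ∀ μs > (1 : ℝ), ∃ X : ℝ, ∀ x ≥ X, ∀ μ ∈ Set.Icc (1 : ℝ) μs,
    D * μ ^ b * f x ≤ f (μ * x)}

/-- The lower Matuszewska index `β(f)` as an extended real number. -/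
noncomputable def lowerMat (f : ℝ → ℝ) : EReal :=
  sSup ((fun b : ℝ => (b : EReal)) '' lowerMatSet f)

namespace Stmt3Aux

variable {X : ℝ} {f : ℝ → ℝ}

/-- The level set whose infimum defines the right inverse. -/
def S (X : ℝ) (f : ℝ → ℝ) (y : ℝ) : Set ℝ := {x | X ≤ x ∧ y ≤ f x}

lemma S_nonempty (hunb : ∀ M : ℝ, ∃ x ≥ X, M < f x) (y : ℝ) : (S X f y).Nonempty := by
  obtain ⟨x, hx, hfx⟩ := hunb y
  exact ⟨x, hx, hfx.le⟩

lemma S_bdd (y : ℝ) : BddBelow (S X f y) := ⟨X, fun z hz => hz.1⟩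

lemma le_g (hunb : ∀ M : ℝ, ∃ x ≥ X, M < f x) (hmono : StrictMonoOn f (Set.Ici X))
    {X₁ y : ℝ} (hX₁ : X ≤ X₁) (hy : f X₁ < y) : X₁ ≤ sInf (S X f y) := by
  refine le_csInf (S_nonempty hunb y) (fun z hz => ?_)
  by_contra h
  push_neg at h
  have : f z ≤ f X₁ := hmono.monotoneOn hz.1 hX₁ h.le
  linarith [hz.2]

lemma f_lt_of_lt_g {y z : ℝ} (hz : X ≤ z) (h : z < sInf (S X f y)) : f z < y := by
  by_contra hcon
  push_neg at hcon
  exact absurd (csInf_le (S_bdd y) ⟨hz, hcon⟩) (not_le.2 h)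

lemma g_f (hmono : StrictMonoOn f (Set.Ici X)) {x : ℝ} (hx : X ≤ x) :
    sInf (S X f (f x)) = x := by
  refine le_antisymm (csInf_le (S_bdd _) ⟨hx, le_refl _⟩)
    (le_csInf ⟨x, hx, le_refl _⟩ (fun z hz => ?_))
  by_contra h
  push_neg at h
  exact absurd hz.2 (not_le.2 (hmono hz.1 hx h))

lemma g_mono (hunb : ∀ M : ℝ, ∃ x ≥ X, M < f x) {y y' : ℝ} (h : y ≤ y') :
    sInf (S X f y) ≤ sInf (S X f y') :=
  csInf_le_csInf (S_bdd y) (S_nonempty hunb y') (fun z hz => ⟨hz.1, h.trans hz.2⟩)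

/-- If `a' ∈ upperMatSet f` with `0 < a'` and `0 < b` with `b * a' < 1`, then `b` is an
admissible lower exponent for the right inverse. -/
lemma memA (hpos : ∀ x ≥ X, 0 < f x) (hmono : StrictMonoOn f (Set.Ici X))
    (hunb : ∀ M : ℝ, ∃ x ≥ X, M < f x)
    {a' : ℝ} (ha' : 0 < a') (hmem : a' ∈ upperMatSet f)
    {b : ℝ} (hb : 0 < b) (hba : b * a' < 1) :
    b ∈ lowerMatSet (fun y => sInf {x | X ≤ x ∧ y ≤ f x}) := by
  obtain ⟨C, hC, hCprop⟩ := hmem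
  set C₁ : ℝ := max C 1 with hC₁def
  have hC₁pos : (0 : ℝ) < C₁ := lt_of_lt_of_le one_pos (le_max_right _ _)
  have hC₁1 : (1 : ℝ) ≤ C₁ := le_max_right _ _
  have hCC₁ : C ≤ C₁ := le_max_left _ _
  refine ⟨min (C₁ ^ (-b)) (C₁ ^ (-a'⁻¹)), lt_min (Real.rpow_pos_of_pos hC₁pos _)
    (Real.rpow_pos_of_pos hC₁pos _), ?_⟩
  intro μs hμs
  set lams : ℝ := max 2 ((μs / C₁) ^ a'⁻¹) with hlamsdef
  have hlams2 : (2 : ℝ) ≤ lams := le_max_left _ _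
  have hlams1 : (1 : ℝ) < lams := lt_of_lt_of_le one_lt_two hlams2
  obtain ⟨X₀, hX₀⟩ := hCprop lams hlams1
  set X₀' : ℝ := max (max X₀ X) 1 with hX₀'def
  have hX₀'X : X ≤ X₀' := le_trans (le_max_right X₀ X) (le_max_left _ _)
  have hX₀'X₀ : X₀ ≤ X₀' := le_trans (le_max_left X₀ X) (le_max_left _ _)
  have hX₀'1 : (1 : ℝ) ≤ X₀' := le_max_right _ _
  set K : ℝ := lams * X₀' with hKdef
  have hKX₀' : X₀' ≤ K := by nlinarith
  have hKX : X ≤ K := hX₀'X.trans hKX₀'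
  refine ⟨f K + 1, ?_⟩
  intro y hy μ hμ
  have hμ1 : (1 : ℝ) ≤ μ := hμ.1
  have hμμs : μ ≤ μs := hμ.2
  have hfK : f X₀' ≤ f K := hmono.monotoneOn hX₀'X hKX hKX₀'
  have hyK : f K < y := by linarith
  have hyX₀' : f X₀' < y := lt_of_le_of_lt hfK hyK
  have hgy : X₀' ≤ sInf (S X f y) := le_g hunb hmono hX₀'X hyX₀'
  have hy0 : (0 : ℝ) < y := lt_trans (hpos X₀' hX₀'X) hyX₀'
  have hμy : y ≤ μ * y := le_mul_of_one_le_left hy0.le hμ1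
  set x : ℝ := sInf (S X f y) with hxdef
  have hx1 : (1 : ℝ) ≤ x := le_trans hX₀'1 hgy
  have hx0 : (0 : ℝ) ≤ x := by linarith
  show min (C₁ ^ (-b)) (C₁ ^ (-a'⁻¹)) * μ ^ b * x ≤ sInf (S X f (μ * y))
  by_cases hcase : μ ≤ C₁
  · -- small μ: use monotonicity of g
    have h1 : x ≤ sInf (S X f (μ * y)) := g_mono hunb hμy
    have h2 : μ ^ b ≤ C₁ ^ b := Real.rpow_le_rpow (by linarith) hcase hb.le
    have h3 : C₁ ^ (-b) * C₁ ^ b = 1 := by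
      rw [← Real.rpow_add hC₁pos]; simp
    have h4 : min (C₁ ^ (-b)) (C₁ ^ (-a'⁻¹)) * μ ^ b ≤ 1 := by
      calc min (C₁ ^ (-b)) (C₁ ^ (-a'⁻¹)) * μ ^ b
          ≤ C₁ ^ (-b) * C₁ ^ b :=
            mul_le_mul (min_le_left _ _) h2 (Real.rpow_nonneg (by linarith) _)
              (Real.rpow_nonneg hC₁pos.le _)
        _ = 1 := h3
    calc min (C₁ ^ (-b)) (C₁ ^ (-a'⁻¹)) * μ ^ b * x ≤ 1 * x :=
          mul_le_mul_of_nonneg_right h4 hx0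
      _ = x := one_mul x
      _ ≤ sInf (S X f (μ * y)) := h1
  · -- large μ
    push_neg at hcase
    set lam : ℝ := (μ / C₁) ^ a'⁻¹ with hlamdef
    have hμC : (1 : ℝ) ≤ μ / C₁ := (one_le_div hC₁pos).2 hcase.le
    have hμCpos : (0 : ℝ) < μ / C₁ := lt_of_lt_of_le one_pos hμC
    have hlam1 : (1 : ℝ) ≤ lam := Real.one_le_rpow hμC (by positivity)
    have hlam0 : (0 : ℝ) < lam := lt_of_lt_of_le one_pos hlam1
    have hlamle : lam ≤ lams := by
      refine le_trans ?_ (le_max_right 2 _)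
      refine Real.rpow_le_rpow hμCpos.le ?_ (by positivity)
      gcongr
    have hlama : lam ^ a' = μ / C₁ := by
      rw [hlamdef, ← Real.rpow_mul hμCpos.le, inv_mul_cancel₀ ha'.ne', Real.rpow_one]
    have key : lam * x ≤ sInf (S X f (μ * y)) := by
      refine le_csInf (S_nonempty hunb _) (fun z hz => ?_)
      by_contra hzlt
      push_neg at hzlt
      set w : ℝ := z / lam with hwdef
      have hwx : w < x := (div_lt_iff₀ hlam0).2 (by linarith [hzlt])
      have hzw : z = lam * w := by
          rw [hwdef, mul_div_assoc', mul_comm, mul_div_assoc, div_self hlam0.ne', mul_one]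
      by_cases hw : X₀' ≤ w
      · have hwX : X ≤ w := hX₀'X.trans hw
        have hfw : f w < y := f_lt_of_lt_g hwX hwx
        have hfw0 : (0 : ℝ) < f w := hpos w hwX
        have hbound := hX₀ w (hX₀'X₀.trans hw) lam ⟨hlam1, hlamle⟩
        have hfz : f z ≤ C * (μ / C₁) * f w := by
          rw [hzw]; calc f (lam * w) ≤ C * lam ^ a' * f w := hbound
            _ = C * (μ / C₁) * f w := by rw [hlama]
        have h5 : C * (μ / C₁) * f w ≤ C₁ * (μ / C₁) * f w :=
          mul_le_mul_of_nonneg_right (mul_le_mul_of_nonneg_right hCC₁ hμCpos.le) hfw0.le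
        have h6 : C₁ * (μ / C₁) = μ := by field_simp
        have h7 : f z < μ * y := by
          have : μ * f w < μ * y := mul_lt_mul_of_pos_left hfw (by linarith)
          calc f z ≤ C₁ * (μ / C₁) * f w := hfz.trans h5
            _ = μ * f w := by rw [h6]
            _ < μ * y := this
        exact absurd hz.2 (not_le.2 h7)
      · push_neg at hw
        have hzK : z < K := by
          rw [hzw, hKdef]
          calc lam * w < lam * X₀' := mul_lt_mul_of_pos_left hw hlam0
            _ ≤ lams * X₀' := mul_le_mul_of_nonneg_right hlamle (by linarith)
        have hfzK : f z ≤ f K := hmono.monotoneOn hz.1 hKX hzK.le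
        have : f z < μ * y := lt_of_le_of_lt hfzK (lt_of_lt_of_le hyK hμy)
        exact absurd hz.2 (not_le.2 this)
    have hbinv : b ≤ a'⁻¹ := by
      rw [← one_div]
      exact (le_div_iff₀ ha').2 hba.le
    have h1 : μ ^ b ≤ μ ^ a'⁻¹ := Real.rpow_le_rpow_of_exponent_le (by linarith) hbinv
    have h2 : lam = C₁ ^ (-a'⁻¹) * μ ^ a'⁻¹ := by
      rw [hlamdef, Real.div_rpow (by linarith) hC₁pos.le, Real.rpow_neg hC₁pos.le]
      ring
    have hDlam : min (C₁ ^ (-b)) (C₁ ^ (-a'⁻¹)) * μ ^ b ≤ lam := by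
      rw [h2]
      exact mul_le_mul (min_le_right _ _) h1 (Real.rpow_nonneg (by linarith) _)
        (Real.rpow_nonneg hC₁pos.le _)
    calc min (C₁ ^ (-b)) (C₁ ^ (-a'⁻¹)) * μ ^ b * x ≤ lam * x :=
          mul_le_mul_of_nonneg_right hDlam hx0
      _ ≤ sInf (S X f (μ * y)) := key

/-- If `b > 0` is an admissible lower exponent for the right inverse, then `1/b` is an
admissible upper exponent for `f`. -/
lemma memB (hpos : ∀ x ≥ X, 0 < f x) (hmono : StrictMonoOn f (Set.Ici X))
    (hunb : ∀ M : ℝ, ∃ x ≥ X, M < f x)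
    {b : ℝ} (hb : 0 < b)
    (hmem : b ∈ lowerMatSet (fun y => sInf {x | X ≤ x ∧ y ≤ f x})) :
    (1 / b) ∈ upperMatSet f := by
  obtain ⟨D, hD, hDprop⟩ := hmem
  set D₀ : ℝ := min D 1 with hD₀def
  have hD₀pos : (0 : ℝ) < D₀ := lt_min hD one_pos
  have hD₀1 : D₀ ≤ 1 := min_le_right _ _
  have hD₀D : D₀ ≤ D := min_le_left _ _
  refine ⟨(2 / D₀) ^ (1 / b), by positivity, ?_⟩
  intro ls hls
  set μs : ℝ := (2 * ls / D₀) ^ (1 / b) with hμsdef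
  have hμs1 : 1 < μs := by
    refine Real.one_lt_rpow ?_ (by positivity)
    rw [lt_div_iff₀ hD₀pos]; nlinarith
  obtain ⟨Y, hY⟩ := hDprop μs hμs1
  set X₁ : ℝ := max X 1 with hX₁def
  have hX₁X : X ≤ X₁ := le_max_left _ _
  obtain ⟨x₀, hx₀X, hx₀f⟩ := hunb (max Y (f X₁))
  refine ⟨max x₀ X₁, ?_⟩
  intro x hx l hl
  have hl1 : (1 : ℝ) ≤ l := hl.1
  have hlls : l ≤ ls := hl.2
  have hxX : X ≤ x := le_trans (hX₁X.trans (le_max_right x₀ X₁)) hx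
  have hx1 : (1 : ℝ) ≤ x := le_trans ((le_max_right X 1).trans (le_max_right x₀ X₁)) hx
  have hfx : max Y (f X₁) < f x :=
    lt_of_lt_of_le hx₀f (hmono.monotoneOn hx₀X hxX ((le_max_left x₀ X₁).trans hx))
  have hfxY : Y ≤ f x := le_trans (le_max_left _ _) hfx.le
  have hfx0 : (0 : ℝ) < f x := hpos x hxX
  set μ : ℝ := (2 * l / D₀) ^ (1 / b) with hμdef
  have h2l : (1 : ℝ) ≤ 2 * l / D₀ := by
    rw [le_div_iff₀ hD₀pos]; nlinarith
  have hμ1 : (1 : ℝ) ≤ μ := Real.one_le_rpow h2l (by positivity)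
  have hμμs : μ ≤ μs := by
    refine Real.rpow_le_rpow (by positivity) ?_ (by positivity)
    gcongr
  have hkey := hY (f x) hfxY μ ⟨hμ1, hμμs⟩
  have hgf : sInf (S X f (f x)) = x := g_f hmono hxX
  have hkey' : D * μ ^ b * x ≤ sInf (S X f (μ * f x)) := by
    calc D * μ ^ b * x = D * μ ^ b * sInf (S X f (f x)) := by rw [hgf]
      _ ≤ sInf (S X f (μ * f x)) := hkey
  have hμb : μ ^ b = 2 * l / D₀ := by
    rw [hμdef, ← Real.rpow_mul (by positivity), one_div, inv_mul_cancel₀ hb.ne',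
      Real.rpow_one]
  have h2 : l * x < D * μ ^ b * x := by
    rw [hμb]
    have hq : D₀ * (2 * l / D₀) = 2 * l := by field_simp
    have hD2 : 2 * l ≤ D * (2 * l / D₀) := by
      have h := mul_le_mul_of_nonneg_right hD₀D (by positivity : (0:ℝ) ≤ 2 * l / D₀)
      linarith
    nlinarith
  have h3 : l * x < sInf (S X f (μ * f x)) := lt_of_lt_of_le h2 hkey'
  have hlxX : X ≤ l * x := hxX.trans (le_mul_of_one_le_left (by linarith) hl1)
  have hflx : f (l * x) < μ * f x := f_lt_of_lt_g hlxX h3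
  have hμeq : μ = (2 / D₀) ^ (1 / b) * l ^ (1 / b) := by
    have hbase : (2 : ℝ) * l / D₀ = 2 / D₀ * l := by ring
    rw [hμdef, hbase, Real.mul_rpow (by positivity) (by linarith : (0:ℝ) ≤ l)]
  calc f (l * x) ≤ μ * f x := hflx.le
    _ = (2 / D₀) ^ (1 / b) * l ^ (1 / b) * f x := by rw [hμeq]

end Stmt3Aux

open Stmt3Aux in
/-- For a positive, strictly increasing, unbounded function `f` on `[X, ∞)`
with finite positive upper Matuszewska index `α(f) = a`, the lower Matuszewska index of
its (right) inverse equals `1 / a`. -/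
theorem stmt3 (X : ℝ) (f : ℝ → ℝ) (hpos : ∀ x ≥ X, 0 < f x)
    (hmono : StrictMonoOn f (Set.Ici X))
    (hunb : ∀ M : ℝ, ∃ x ≥ X, M < f x)
    (a : ℝ) (ha : 0 < a) (hα : upperMat f = (a : EReal)) :
    lowerMat (fun y => sInf {x | X ≤ x ∧ y ≤ f x}) = ((1 / a : ℝ) : EReal) := by
  have ha' : (0 : ℝ) < 1 / a := by positivity
  refine le_antisymm ?_ ?_
  · -- every admissible lower exponent b satisfies b ≤ 1/a
    refine sSup_le ?_
    rintro e ⟨b, hbmem, rfl⟩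
    rw [EReal.coe_le_coe_iff]
    by_contra h
    push_neg at h
    have hb : 0 < b := lt_trans ha' h
    have h1b := memB hpos hmono hunb hb hbmem
    have hle : (a : EReal) ≤ ((1 / b : ℝ) : EReal) := by
      rw [← hα]; exact sInf_le ⟨1 / b, h1b, rfl⟩
    rw [EReal.coe_le_coe_iff] at hle
    have h1 : 1 < b * a := (div_lt_iff₀ ha).mp h
    have h2 : a * b ≤ 1 := (le_div_iff₀ hb).mp hle
    nlinarith
  · -- sSup is at least 1/a
    by_contra h
    push_neg at h
    obtain ⟨z, hz1, hz2⟩ := EReal.exists_between_coe_real h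
    set b : ℝ := max z (1 / (2 * a)) with hbdef
    have hb0 : 0 < b := lt_of_lt_of_le (by positivity) (le_max_right _ _)
    have hz2' : z < 1 / a := by exact_mod_cast hz2
    have hb : b < 1 / a := by
      refine max_lt hz2' ?_
      rw [div_lt_div_iff₀ (by positivity) ha]
      nlinarith
    have hab : a < 1 / b := by
      rw [lt_div_iff₀ hb0]
      have := (lt_div_iff₀ ha).mp hb
      nlinarith
    have hlt : sInf ((fun a : ℝ => (a : EReal)) '' upperMatSet f) < ((1 / b : ℝ) : EReal) := by
      rw [show sInf ((fun a : ℝ => (a : EReal)) '' upperMatSet f) = upperMat f from rfl, hα]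
      exact_mod_cast hab
    obtain ⟨e, ⟨a', ha'mem, rfl⟩, helt⟩ := sInf_lt_iff.mp hlt
    have ha'lt : a' < 1 / b := by
      exact_mod_cast (show (a' : EReal) < ((1 / b : ℝ) : EReal) from helt)
    have haa' : a ≤ a' := by
      have h' : (a : EReal) ≤ (a' : EReal) := by
        rw [← hα]; exact sInf_le ⟨a', ha'mem, rfl⟩
      exact_mod_cast h'
    have ha'0 : 0 < a' := lt_of_lt_of_le ha haa'
    have hba' : b * a' < 1 := by
      have := (lt_div_iff₀ hb0).mp ha'lt
      nlinarith
    have hbmem := memA hpos hmono hunb ha'0 ha'mem hb0 hba'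
    have hle : ((b : ℝ) : EReal) ≤ sSup ((fun b : ℝ => (b : EReal)) '' lowerMatSet
        (fun y => sInf {x | X ≤ x ∧ y ≤ f x})) := le_sSup ⟨b, hbmem, rfl⟩
    have hzb : ((z : ℝ) : EReal) ≤ ((b : ℝ) : EReal) := by
      exact_mod_cast le_max_left z (1 / (2 * a))
    exact absurd (hzb.trans hle) (not_le.2 hz1)
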